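/- (ODE comparison for moment generation) Suppose y : (0,∞) → [0,∞) is differentiable and satisfies y'(t) ≤ −A·y(t)^{1+γ} + B for all t > 0, where A, B > 0 and γ > 0. Then for all t > 0, y(t) ≤ (B/A)^{1/(1+γ)} + (1/(Aγt))^{1/γ}. -/

import Mathlib

open Real Set Filter Topology

/-- Strict superadditivity of rpow with exponent > 1. -/
lemma rpow_strict_superadd {m b p : ℝ} (hm : 0 < m) (hb : 0 < b) (hp : 1 < p) :
    m ^ p + b ^ p < (m + b) ^ p := by
  have hmb : 0 < m + b := by linarith
  have hp1 : (0:ℝ) < p - 1 := by linarith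
  have e1 : m ^ p = m * m ^ (p - 1) := by
    nth_rewrite 1 [show p = 1 + (p - 1) by ring]
    rw [Real.rpow_add hm, Real.rpow_one]
  have e2 : b ^ p = b * b ^ (p - 1) := by
    nth_rewrite 1 [show p = 1 + (p - 1) by ring]
    rw [Real.rpow_add hb, Real.rpow_one]
  have e3 : (m + b) ^ p = (m + b) * (m + b) ^ (p - 1) := by
    nth_rewrite 1 [show p = 1 + (p - 1) by ring]
    rw [Real.rpow_add hmb, Real.rpow_one]
  have hlt1 : m ^ (p - 1) < (m + b) ^ (p - 1) :=
    Real.rpow_lt_rpow hm.le (by linarith) hp1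
  have hlt2 : b ^ (p - 1) < (m + b) ^ (p - 1) :=
    Real.rpow_lt_rpow hb.le (by linarith) hp1
  have h1 : m * m ^ (p - 1) < m * (m + b) ^ (p - 1) := mul_lt_mul_of_pos_left hlt1 hm
  have h2 : b * b ^ (p - 1) < b * (m + b) ^ (p - 1) := mul_lt_mul_of_pos_left hlt2 hb
  rw [e1, e2, e3]
  nlinarith

/-- Comparison with a shifted barrier. -/
lemma barrier_step
    (A B γ : ℝ) (hA : 0 < A) (hB : 0 < B) (hγ : 0 < γ)
    (y : ℝ → ℝ) (hy0 : ∀ t, 0 < t → 0 ≤ y t)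
    (hdiff : ∀ t, 0 < t → DifferentiableAt ℝ y t)
    (hode : ∀ t, 0 < t → deriv y t ≤ -A * y t ^ (1 + γ) + B)
    (s t₀ : ℝ) (hs : 0 < s) (hst : s < t₀) :
    y t₀ ≤ (B / A) ^ (1 / (1 + γ)) + (1 / (A * γ)) ^ (1 / γ) * (t₀ - s) ^ (-(1 / γ)) := by
  set M : ℝ := (B / A) ^ (1 / (1 + γ)) with hMdef
  set c : ℝ := (1 / (A * γ)) ^ (1 / γ) with hcdef
  have hM : 0 < M := Real.rpow_pos_of_pos (by positivity) _
  have hc : 0 < c := Real.rpow_pos_of_pos (by positivity) _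
  have hp : (1:ℝ) < 1 + γ := by linarith
  have hexp0 : -(1 / γ) ≤ (0:ℝ) := neg_nonpos.mpr (by positivity)
  have hcγ : c ^ γ = 1 / (A * γ) := by
    rw [hcdef, ← Real.rpow_mul (by positivity), one_div_mul_cancel (ne_of_gt hγ),
      Real.rpow_one]
  have hMp : A * M ^ (1 + γ) = B := by
    rw [hMdef, ← Real.rpow_mul (by positivity),
      one_div_mul_cancel (by positivity : (0:ℝ) < 1 + γ).ne', Real.rpow_one]
    field_simp
  -- choose `a < s` with the barrier at `s` dominating `y s`
  set K : ℝ := (c / (1 + y s)) ^ γ with hKdef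
  have hys : 0 ≤ y s := hy0 s hs
  have hK : 0 < K := Real.rpow_pos_of_pos (by positivity) _
  set δ : ℝ := min (s / 2) K with hδdef
  have hδpos : 0 < δ := lt_min (by linarith) hK
  have hδs : δ < s := lt_of_le_of_lt (min_le_left _ _) (by linarith)
  set a : ℝ := s - δ with hadef
  have ha : 0 < a := by rw [hadef]; linarith
  have has : a < s := by rw [hadef]; linarith
  have hsa : s - a = δ := by rw [hadef]; ring
  -- derivative of the barrier
  have hψderiv : ∀ x : ℝ, a < x →
      HasDerivAt (fun t : ℝ => M + c * (t - a) ^ (-(1 / γ)))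
        (c * (-(1 / γ) * (x - a) ^ (-(1 / γ) - 1) * 1)) x := by
    intro x hax
    have hxa : 0 < x - a := by linarith
    have h1 : HasDerivAt (fun t : ℝ => t - a) 1 x := (hasDerivAt_id x).sub_const a
    have h2 : HasDerivAt (fun u : ℝ => u ^ (-(1 / γ)))
        (-(1 / γ) * (x - a) ^ (-(1 / γ) - 1)) (x - a) :=
      Real.hasDerivAt_rpow_const (Or.inl (ne_of_gt hxa))
    exact ((h2.comp x h1).const_mul c).const_add M
  -- the comparison
  have hcomp : ∀ ⦃x⦄, x ∈ Icc s t₀ → y x ≤ M + c * (x - a) ^ (-(1 / γ)) := by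
    apply image_le_of_deriv_right_lt_deriv_boundary' (f' := deriv y)
      (B := fun t : ℝ => M + c * (t - a) ^ (-(1 / γ)))
      (B' := fun t : ℝ => c * (-(1 / γ) * (t - a) ^ (-(1 / γ) - 1) * 1))
    · exact fun x hx =>
        ((hdiff x (lt_of_lt_of_le hs hx.1)).continuousAt).continuousWithinAt
    · exact fun x hx =>
        ((hdiff x (lt_of_lt_of_le hs hx.1)).hasDerivAt).hasDerivWithinAt
    · -- start condition
      show y s ≤ M + c * (s - a) ^ (-(1 / γ))
      rw [hsa]
      have hδK : δ ≤ K := min_le_right _ _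
      have hmono : K ^ (-(1 / γ)) ≤ δ ^ (-(1 / γ)) :=
        Real.rpow_le_rpow_of_nonpos hδpos hδK hexp0
      have hKr : K ^ (-(1 / γ)) = (1 + y s) / c := by
        rw [hKdef, ← Real.rpow_mul (by positivity),
          show γ * -(1 / γ) = -1 by field_simp, Real.rpow_neg_one, inv_div]
      have h5 : (1 + y s) ≤ c * δ ^ (-(1 / γ)) := by
        calc (1 + y s) = c * ((1 + y s) / c) := by field_simp
          _ = c * K ^ (-(1 / γ)) := by rw [hKr]
          _ ≤ c * δ ^ (-(1 / γ)) := mul_le_mul_of_nonneg_left hmono hc.le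
      linarith
    · exact fun x hx =>
        (hψderiv x (lt_of_lt_of_le has hx.1)).continuousAt.continuousWithinAt
    · exact fun x hx =>
        (hψderiv x (lt_of_lt_of_le has hx.1)).hasDerivWithinAt
    · -- contact-point bound
      intro x hx heq
      have hxpos : 0 < x := lt_of_lt_of_le hs hx.1
      have hax : a < x := lt_of_lt_of_le has hx.1
      have hxa : 0 < x - a := by linarith
      have hbpos : 0 < c * (x - a) ^ (-(1 / γ)) :=
        mul_pos hc (Real.rpow_pos_of_pos hxa _)
      have hsup : M ^ (1 + γ) + (c * (x - a) ^ (-(1 / γ))) ^ (1 + γ)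
          < (M + c * (x - a) ^ (-(1 / γ))) ^ (1 + γ) :=
        rpow_strict_superadd hM hbpos hp
      have hbp : A * (c * (x - a) ^ (-(1 / γ))) ^ (1 + γ)
          = c / γ * (x - a) ^ (-(1 / γ) - 1) := by
        rw [Real.mul_rpow hc.le (Real.rpow_pos_of_pos hxa _).le,
          ← Real.rpow_mul hxa.le, show -(1 / γ) * (1 + γ) = -(1 / γ) - 1 by field_simp; ring,
          Real.rpow_add hc, Real.rpow_one, hcγ]
        field_simp
      calc deriv y x ≤ -A * y x ^ (1 + γ) + B := hode x hxpos
        _ = -A * (M + c * (x - a) ^ (-(1 / γ))) ^ (1 + γ) + B := by rw [heq]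
        _ < -A * (M ^ (1 + γ) + (c * (x - a) ^ (-(1 / γ))) ^ (1 + γ)) + B := by
            nlinarith [hsup, hA]
        _ = -(A * (c * (x - a) ^ (-(1 / γ))) ^ (1 + γ)) := by linear_combination -hMp
        _ = c * (-(1 / γ) * (x - a) ^ (-(1 / γ) - 1) * 1) := by rw [hbp]; ring
  -- conclude, using `t₀ - s ≤ t₀ - a`
  have h1 : (0:ℝ) < t₀ - s := by linarith
  have h2 : t₀ - s ≤ t₀ - a := by rw [hadef]; linarith
  have h3 : (t₀ - a) ^ (-(1 / γ)) ≤ (t₀ - s) ^ (-(1 / γ)) :=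
    Real.rpow_le_rpow_of_nonpos h1 h2 hexp0
  have h4 : y t₀ ≤ M + c * (t₀ - a) ^ (-(1 / γ)) := hcomp (right_mem_Icc.mpr hst.le)
  nlinarith [mul_le_mul_of_nonneg_left h3 hc.le]

theorem ode_comparison_generation
    (A B γ : ℝ) (hA : 0 < A) (hB : 0 < B) (hγ : 0 < γ)
    (y : ℝ → ℝ) (hy0 : ∀ t, 0 < t → 0 ≤ y t)
    (hdiff : ∀ t, 0 < t → DifferentiableAt ℝ y t)
    (hode : ∀ t, 0 < t → deriv y t ≤ -A * y t ^ (1 + γ) + B) :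
    ∀ t, 0 < t → y t ≤ (B / A) ^ (1 / (1 + γ)) + (1 / (A * γ * t)) ^ (1 / γ) := by
  intro t₀ ht₀
  set M : ℝ := (B / A) ^ (1 / (1 + γ)) with hMdef
  set c : ℝ := (1 / (A * γ)) ^ (1 / γ) with hcdef
  have hkey : (1 / (A * γ * t₀)) ^ (1 / γ) = c * t₀ ^ (-(1 / γ)) := by
    rw [show 1 / (A * γ * t₀) = (1 / (A * γ)) * (1 / t₀) by field_simp,
      Real.mul_rpow (by positivity) (by positivity), hcdef]
    congr 1
    rw [one_div, Real.inv_rpow ht₀.le, ← Real.rpow_neg ht₀.le]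
  rw [hkey]
  -- take the limit s → 0⁺ in `barrier_step`
  have hcont : ContinuousAt (fun s : ℝ => M + c * (t₀ - s) ^ (-(1 / γ))) 0 := by
    have h2 : ContinuousAt (fun s : ℝ => t₀ - s) 0 := by fun_prop
    have h3 : ContinuousAt (fun u : ℝ => u ^ (-(1 / γ))) (t₀ - 0) :=
      Real.continuousAt_rpow_const _ _ (Or.inl (by simpa using ht₀.ne'))
    exact continuousAt_const.add (continuousAt_const.mul (h3.comp h2))
  have hg : Tendsto (fun s : ℝ => M + c * (t₀ - s) ^ (-(1 / γ))) (𝓝[>] 0)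
      (𝓝 (M + c * t₀ ^ (-(1 / γ)))) := by
    have := (hcont.continuousWithinAt (s := Ioi (0:ℝ))).tendsto
    simpa using this
  refine ge_of_tendsto hg ?_
  filter_upwards [Ioo_mem_nhdsGT_of_mem (Set.left_mem_Ico.mpr ht₀)] with s hs
  exact barrier_step A B γ hA hB hγ y hy0 hdiff hode s t₀ hs.1 hs.2
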